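/- For every κ > 1 there exists a constant C_κ > 0 such that for every g ∈ GL_d(ℝ) and all nonzero x, y ∈ ℝ^d: |log(‖gx‖/‖x‖) − log(‖gy‖/‖y‖)| ≤ C_κ * (1 + log N(g))^κ * H_{κ-1}(d(x̄, ȳ)), where d(x̄, ȳ) = ‖x ∧ y‖/(‖x‖ ‖y‖), H_q(0) = 0 and H_q(t) = |log(t e^{-q-1})|^{-q} for t ∈ (0,1], and N(g) = max(‖g‖, ‖g^{-1}‖). -/

import Mathlib

set_option maxHeartbeats 1000000
open scoped RealInnerProductSpace

noncomputable instance (d : ℕ) : MeasurableSpace (GL (Fin d) ℝ) := borel _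

/-- `N g = max(‖g‖, ‖g⁻¹‖)` with the Euclidean operator norm. -/
noncomputable def matN {d : ℕ} (g : GL (Fin d) ℝ) : ℝ :=
  max ‖Matrix.toEuclideanCLM (𝕜 := ℝ) ((g : GL (Fin d) ℝ) : Matrix (Fin d) (Fin d) ℝ)‖
    ‖Matrix.toEuclideanCLM (𝕜 := ℝ) ((g⁻¹ : GL (Fin d) ℝ) : Matrix (Fin d) (Fin d) ℝ)‖

/-- The distance `d(x̄, ȳ) = ‖x ∧ y‖ / (‖x‖ ‖y‖)` on projective space, where
`‖x ∧ y‖² = ‖x‖² ‖y‖² - ⟨x, y⟩²` (Lagrange's identity). -/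
noncomputable def projDist {d : ℕ} (x y : EuclideanSpace ℝ (Fin d)) : ℝ :=
  Real.sqrt (‖x‖ ^ 2 * ‖y‖ ^ 2 - ⟪x, y⟫ ^ 2) / (‖x‖ * ‖y‖)

/-- `H q (0) = 0` and `H q t = |log (t e^{-q-1})|^{-q}` for `t ∈ (0,1]`. -/
noncomputable def Hfun (q t : ℝ) : ℝ :=
  if t = 0 then 0 else |Real.log (t * Real.exp (-(q + 1)))| ^ (-q)

section aux

lemma stmt9_exp_ge_pow (n : ℕ) {v : ℝ} (hv : 0 ≤ v) :
    v ^ n / n.factorial ≤ Real.exp v := by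
  calc v ^ n / n.factorial ≤ ∑ i ∈ Finset.range (n + 1), v ^ i / i.factorial := by
        refine Finset.single_le_sum (f := fun i => v ^ i / (i.factorial : ℝ)) ?_
          (Finset.self_mem_range_succ n)
        intro i _
        positivity
    _ ≤ Real.exp v := Real.sum_le_exp_of_nonneg hv _

variable {d : ℕ} (T S : EuclideanSpace ℝ (Fin d) →L[ℝ] EuclideanSpace ℝ (Fin d)) (N : ℝ)

lemma projDist_nonneg (x y : EuclideanSpace ℝ (Fin d)) : 0 ≤ projDist x y := by
  unfold projDist; positivity

lemma projDist_le_one {x y : EuclideanSpace ℝ (Fin d)} (hx : x ≠ 0) (hy : y ≠ 0) :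
    projDist x y ≤ 1 := by
  have hnx : 0 < ‖x‖ := norm_pos_iff.mpr hx
  have hny : 0 < ‖y‖ := norm_pos_iff.mpr hy
  rw [projDist, div_le_one (by positivity)]
  calc Real.sqrt (‖x‖ ^ 2 * ‖y‖ ^ 2 - ⟪x, y⟫ ^ 2) ≤ Real.sqrt (‖x‖ ^ 2 * ‖y‖ ^ 2) := by
        apply Real.sqrt_le_sqrt; nlinarith [sq_nonneg (⟪x, y⟫ : ℝ)]
    _ = ‖x‖ * ‖y‖ := by
        rw [← mul_pow, Real.sqrt_sq (by positivity)]

lemma stmt9_bdd (hTN : ‖T‖ ≤ N) (hSN : ‖S‖ ≤ N) (hST : ∀ z, S (T z) = z) (hN : 1 ≤ N)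
    {x : EuclideanSpace ℝ (Fin d)} (hx : x ≠ 0) :
    |Real.log (‖T x‖ / ‖x‖)| ≤ Real.log N := by
  have hnx : 0 < ‖x‖ := norm_pos_iff.mpr hx
  have hN0 : 0 < N := lt_of_lt_of_le one_pos hN
  have h1 : ‖T x‖ ≤ N * ‖x‖ := le_trans (T.le_opNorm x) (by nlinarith [norm_nonneg x])
  have h2 : ‖x‖ ≤ N * ‖T x‖ := by
    calc ‖x‖ = ‖S (T x)‖ := by rw [hST]
      _ ≤ ‖S‖ * ‖T x‖ := S.le_opNorm _
      _ ≤ N * ‖T x‖ := by nlinarith [norm_nonneg (T x)]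
  have hTx : 0 < ‖T x‖ := by nlinarith
  rw [abs_le]
  constructor
  · rw [← Real.log_inv]
    apply Real.log_le_log (by positivity)
    rw [inv_le_iff_one_le_mul₀ hN0, div_mul_eq_mul_div, le_div_iff₀ hnx, one_mul]
    linarith
  · apply Real.log_le_log (by positivity)
    rw [div_le_iff₀ hnx]
    linarith

lemma stmt9_lip (hTN : ‖T‖ ≤ N) (hSN : ‖S‖ ≤ N) (hST : ∀ z, S (T z) = z) (hN : 1 ≤ N)
    {x y : EuclideanSpace ℝ (Fin d)} (hx : x ≠ 0) (hy : y ≠ 0) :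
    |Real.log (‖T x‖ / ‖x‖) - Real.log (‖T y‖ / ‖y‖)| ≤
      Real.sqrt 2 * N ^ 2 * projDist x y := by
  have hnx : 0 < ‖x‖ := norm_pos_iff.mpr hx
  have hny : 0 < ‖y‖ := norm_pos_iff.mpr hy
  have hN0 : 0 < N := lt_of_lt_of_le one_pos hN
  set ε : ℝ := if (⟪x, y⟫ : ℝ) < 0 then -1 else 1 with hε
  have hε1 : |ε| = 1 := by rw [hε]; split <;> simp
  have hε2 : ε ^ 2 = 1 := by rw [hε]; split <;> norm_num
  set u : EuclideanSpace ℝ (Fin d) := (‖x‖:ℝ)⁻¹ • x with hu_def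
  set v : EuclideanSpace ℝ (Fin d) := (ε * (‖y‖:ℝ)⁻¹) • y with hv_def
  have hu : ‖u‖ = 1 := by
    rw [hu_def, norm_smul, norm_inv, norm_norm, inv_mul_cancel₀ hnx.ne']
  have hv : ‖v‖ = 1 := by
    rw [hv_def, norm_smul, norm_mul, norm_inv, norm_norm, Real.norm_eq_abs, hε1, one_mul,
      inv_mul_cancel₀ hny.ne']
  have hTu : ‖T u‖ = ‖T x‖ / ‖x‖ := by
    rw [hu_def, map_smul, norm_smul, norm_inv, norm_norm, inv_mul_eq_div]
  have hTv : ‖T v‖ = ‖T y‖ / ‖y‖ := by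
    rw [hv_def, map_smul, norm_smul, norm_mul, norm_inv, norm_norm, Real.norm_eq_abs, hε1,
      one_mul, inv_mul_eq_div]
  set c : ℝ := ⟪u, v⟫ with hc_def
  have hcval : c = ε * (⟪x, y⟫ / (‖x‖ * ‖y‖)) := by
    rw [hc_def, hu_def, hv_def, real_inner_smul_left, real_inner_smul_right]
    field_simp
  have hc0 : 0 ≤ c := by
    rw [hcval, hε]
    split
    · rename_i h
      have : (⟪x, y⟫ : ℝ) / (‖x‖ * ‖y‖) ≤ 0 := div_nonpos_of_nonpos_of_nonneg h.le (by positivity)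
      nlinarith
    · rename_i h
      push_neg at h
      have : 0 ≤ (⟪x, y⟫ : ℝ) / (‖x‖ * ‖y‖) := div_nonneg h (by positivity)
      nlinarith
  have hc1 : c ≤ 1 := by
    have := real_inner_le_norm u v
    rw [hu, hv] at this; simpa using this
  have hD0 : 0 ≤ ‖x‖ ^ 2 * ‖y‖ ^ 2 - ⟪x, y⟫ ^ 2 := by
    have := abs_real_inner_le_norm x y
    nlinarith [abs_nonneg (⟪x, y⟫ : ℝ), sq_abs (⟪x, y⟫ : ℝ)]
  have ht2 : projDist x y ^ 2 = 1 - c ^ 2 := by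
    rw [projDist, div_pow, Real.sq_sqrt hD0, hcval]
    field_simp
    rw [hε2]
    ring
  have huv : ‖u - v‖ ^ 2 = 2 - 2 * c := by
    rw [norm_sub_sq_real, hu, hv, ← hc_def]; ring
  have huv' : ‖u - v‖ ≤ Real.sqrt 2 * projDist x y := by
    have hsq : ‖u - v‖ ^ 2 ≤ (Real.sqrt 2 * projDist x y) ^ 2 := by
      rw [mul_pow, Real.sq_sqrt (by norm_num : (0:ℝ) ≤ 2), ht2, huv]
      nlinarith
    have h := Real.sqrt_le_sqrt hsq
    rwa [Real.sqrt_sq (norm_nonneg _),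
      Real.sqrt_sq (mul_nonneg (Real.sqrt_nonneg 2) (projDist_nonneg x y))] at h
  set a : ℝ := ‖T u‖ with ha_def
  set b : ℝ := ‖T v‖ with hb_def
  have hbound : ∀ w : EuclideanSpace ℝ (Fin d), ‖w‖ = 1 → 1 ≤ N * ‖T w‖ := by
    intro w hw
    calc (1:ℝ) = ‖w‖ := hw.symm
      _ = ‖S (T w)‖ := by rw [hST]
      _ ≤ ‖S‖ * ‖T w‖ := S.le_opNorm _
      _ ≤ N * ‖T w‖ := by nlinarith [norm_nonneg (T w)]
  have ha1 : 1 ≤ N * a := hbound u hu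
  have hb1 : 1 ≤ N * b := hbound v hv
  have ha0 : 0 < a := by nlinarith
  have hb0 : 0 < b := by nlinarith
  have hab : |a - b| ≤ N * ‖u - v‖ := by
    calc |a - b| ≤ ‖T u - T v‖ := abs_norm_sub_norm_le _ _
      _ = ‖T (u - v)‖ := by rw [map_sub]
      _ ≤ ‖T‖ * ‖u - v‖ := T.le_opNorm _
      _ ≤ N * ‖u - v‖ := by nlinarith [norm_nonneg (u - v)]
  have hlog : |Real.log a - Real.log b| ≤ N * |a - b| := by
    rw [abs_le]
    constructor
    · have h1 : Real.log b - Real.log a = Real.log (b / a) := (Real.log_div hb0.ne' ha0.ne').symm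
      have h2 : Real.log (b / a) ≤ b / a - 1 := Real.log_le_sub_one_of_pos (div_pos hb0 ha0)
      have h3 : b / a - 1 = (b - a) / a := by field_simp
      have h4 : (b - a) / a ≤ N * |a - b| := by
        rw [div_le_iff₀ ha0]
        have : b - a ≤ |a - b| := by rw [abs_sub_comm]; exact le_abs_self _
        nlinarith [abs_nonneg (a - b)]
      linarith
    · have h1 : Real.log a - Real.log b = Real.log (a / b) := (Real.log_div ha0.ne' hb0.ne').symm
      have h2 : Real.log (a / b) ≤ a / b - 1 := Real.log_le_sub_one_of_pos (div_pos ha0 hb0)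
      have h3 : a / b - 1 = (a - b) / b := by field_simp
      have h4 : (a - b) / b ≤ N * |a - b| := by
        rw [div_le_iff₀ hb0]
        have : a - b ≤ |a - b| := le_abs_self _
        nlinarith [abs_nonneg (a - b)]
      linarith
  calc |Real.log (‖T x‖ / ‖x‖) - Real.log (‖T y‖ / ‖y‖)| = |Real.log a - Real.log b| := by
        rw [← hTu, ← hTv]
    _ ≤ N * |a - b| := hlog
    _ ≤ N * (N * ‖u - v‖) := by
        apply mul_le_mul_of_nonneg_left hab hN0.le
    _ ≤ N * (N * (Real.sqrt 2 * projDist x y)) := by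
        apply mul_le_mul_of_nonneg_left (mul_le_mul_of_nonneg_left huv' hN0.le) hN0.le
    _ = Real.sqrt 2 * N ^ 2 * projDist x y := by ring

end aux

/-- Bound `t^{1/3} (q+1-log t)^q ≤ A`. -/
lemma stmt9_poly_bound {q : ℝ} (hq : 0 < q) {t : ℝ} (ht0 : 0 < t) (ht1 : t ≤ 1) :
    t ^ ((1:ℝ)/3) ≤ (Real.exp ((q+1)/3) * 3 ^ ⌈q⌉₊ * (⌈q⌉₊).factorial) *
      (q + 1 - Real.log t) ^ (-q) := by
  set n := ⌈q⌉₊ with hn_def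
  have hqn : q ≤ (n : ℝ) := Nat.le_ceil q
  set a : ℝ := q + 1 - Real.log t with ha_def
  have hlogt : Real.log t ≤ 0 := Real.log_nonpos ht0.le ht1
  have ha1 : 1 ≤ a := by rw [ha_def]; linarith
  have ha0 : 0 < a := lt_of_lt_of_le one_pos ha1
  have haq : (0:ℝ) < a ^ q := Real.rpow_pos_of_pos ha0 q
  rw [Real.rpow_neg ha0.le, ← div_eq_mul_inv, le_div_iff₀ haq]
  have h1 : t ^ ((1:ℝ)/3) = Real.exp ((q+1)/3) * Real.exp (-(a/3)) := by
    rw [Real.rpow_def_of_pos ht0, ← Real.exp_add]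
    congr 1
    rw [ha_def]; ring
  have h2 : a ^ q ≤ a ^ n := by
    calc a ^ q ≤ a ^ (n : ℝ) := Real.rpow_le_rpow_of_exponent_le ha1 hqn
      _ = a ^ n := Real.rpow_natCast a n
  have h3 : a ^ n ≤ 3 ^ n * (n.factorial : ℝ) * Real.exp (a/3) := by
    have := stmt9_exp_ge_pow n (v := a/3) (by positivity)
    rw [div_pow, div_div] at this
    rw [div_le_iff₀ (by positivity)] at this
    calc a ^ n ≤ Real.exp (a/3) * (3 ^ n * (n.factorial : ℝ)) := this
      _ = 3 ^ n * (n.factorial : ℝ) * Real.exp (a/3) := by ring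
  calc t ^ ((1:ℝ)/3) * a ^ q
      ≤ (Real.exp ((q+1)/3) * Real.exp (-(a/3))) * (3 ^ n * (n.factorial : ℝ) * Real.exp (a/3)) := by
        rw [h1]
        apply mul_le_mul_of_nonneg_left (le_trans h2 h3) (by positivity)
    _ = Real.exp ((q+1)/3) * 3 ^ n * (n.factorial : ℝ) * (Real.exp (-(a/3)) * Real.exp (a/3)) := by
        ring
    _ = Real.exp ((q+1)/3) * 3 ^ n * (n.factorial : ℝ) := by
        rw [← Real.exp_add]; simp

/-- for every `κ > 1` there is `C_κ > 0` such that for every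
`g ∈ GL_d(ℝ)` and nonzero `x, y ∈ ℝ^d`,
`|log(‖gx‖/‖x‖) - log(‖gy‖/‖y‖)| ≤ C_κ (1 + log N g)^κ H_{κ-1}(d(x̄, ȳ))`. -/
theorem stmt9 (d : ℕ) (κ : ℝ) (hκ : 1 < κ) :
    ∃ C > 0, ∀ (g : GL (Fin d) ℝ) (x y : EuclideanSpace ℝ (Fin d)), x ≠ 0 → y ≠ 0 →
      |Real.log (‖Matrix.toEuclideanCLM (𝕜 := ℝ)
            ((g : GL (Fin d) ℝ) : Matrix (Fin d) (Fin d) ℝ) x‖ / ‖x‖) -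
        Real.log (‖Matrix.toEuclideanCLM (𝕜 := ℝ)
            ((g : GL (Fin d) ℝ) : Matrix (Fin d) (Fin d) ℝ) y‖ / ‖y‖)| ≤
      C * (1 + Real.log (matN g)) ^ κ * Hfun (κ - 1) (projDist x y) := by
  set q : ℝ := κ - 1 with hq_def
  have hq : 0 < q := by rw [hq_def]; linarith
  set A : ℝ := Real.exp ((q+1)/3) * 3 ^ ⌈q⌉₊ * (⌈q⌉₊).factorial with hA_def
  have hA0 : 0 < A := by
    rw [hA_def]
    positivity
  have hq4 : (0:ℝ) < (q + 4) ^ q := Real.rpow_pos_of_pos (by linarith) q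
  refine ⟨Real.sqrt 2 * A + 2 * (q + 4) ^ q, by positivity, ?_⟩
  intro g x y hx hy
  set T := Matrix.toEuclideanCLM (𝕜 := ℝ) ((g : GL (Fin d) ℝ) : Matrix (Fin d) (Fin d) ℝ) with hT_def
  set S := Matrix.toEuclideanCLM (𝕜 := ℝ) ((g⁻¹ : GL (Fin d) ℝ) : Matrix (Fin d) (Fin d) ℝ) with hS_def
  set N : ℝ := matN g with hN_def
  have hTN : ‖T‖ ≤ N := le_max_left _ _
  have hSN : ‖S‖ ≤ N := le_max_right _ _
  have hST : ∀ z, S (T z) = z := by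
    intro z
    have h1 : S * T = 1 := by
      rw [hS_def, hT_def, ← map_mul, Units.inv_mul, map_one]
    calc S (T z) = (S * T) z := rfl
      _ = z := by rw [h1]; rfl
  have hN1 : 1 ≤ N := by
    have hnx : 0 < ‖x‖ := norm_pos_iff.mpr hx
    have h1 : ‖T x‖ ≤ N * ‖x‖ := le_trans (T.le_opNorm x) (by
      nlinarith [norm_nonneg x, norm_nonneg T])
    have h2 : ‖x‖ ≤ N * ‖T x‖ := by
      calc ‖x‖ = ‖S (T x)‖ := by rw [hST]
        _ ≤ ‖S‖ * ‖T x‖ := S.le_opNorm _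
        _ ≤ N * ‖T x‖ := by nlinarith [norm_nonneg (T x), norm_nonneg S]
    have hN0 : 0 ≤ N := le_trans (norm_nonneg T) hTN
    nlinarith [norm_nonneg (T x)]
  set L : ℝ := 1 + Real.log N with hL_def
  have hlogN : 0 ≤ Real.log N := Real.log_nonneg hN1
  have hL1 : 1 ≤ L := by rw [hL_def]; linarith
  have hL0 : 0 < L := lt_of_lt_of_le one_pos hL1
  have hLκ : 1 ≤ L ^ κ := Real.one_le_rpow hL1 (by linarith)
  set t : ℝ := projDist x y with ht_def
  have ht0 : 0 ≤ t := projDist_nonneg x y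
  have ht1 : t ≤ 1 := projDist_le_one hx hy
  have hlip := stmt9_lip T S N hTN hSN hST hN1 hx hy
  rw [← ht_def] at hlip
  by_cases htz : t = 0
  · rw [htz] at hlip ⊢
    rw [Hfun, if_pos rfl]
    simpa using hlip
  · have htpos : 0 < t := lt_of_le_of_ne ht0 (Ne.symm htz)
    have hlogt : Real.log t ≤ 0 := Real.log_nonpos ht0 ht1
    set a : ℝ := q + 1 - Real.log t with ha_def
    have ha1 : 1 ≤ a := by rw [ha_def]; linarith
    have ha0 : 0 < a := lt_of_lt_of_le one_pos ha1
    have hH : Hfun q t = a ^ (-q) := by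
      rw [Hfun, if_neg htz, Real.log_mul htz (Real.exp_ne_zero _), Real.log_exp,
        abs_of_nonpos (by linarith)]
      congr 1
      rw [ha_def]; ring
    have hHpos : 0 < Hfun q t := by rw [hH]; exact Real.rpow_pos_of_pos ha0 _
    rw [hH]
    have haq : (0:ℝ) < a ^ q := Real.rpow_pos_of_pos ha0 q
    have hanegq : (0:ℝ) < a ^ (-q) := Real.rpow_pos_of_pos ha0 _
    by_cases hcase : t ≤ Real.exp (-(3 * L))
    · -- small t : use Lipschitz bound
      have hNle : N ^ 2 ≤ Real.exp (2 * L) := by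
        have hNpos : (0:ℝ) < N := by linarith
        calc N ^ 2 = Real.exp (2 * Real.log N) := by
              rw [two_mul, Real.exp_add, Real.exp_log hNpos, sq]
            _ ≤ Real.exp (2 * L) := by
              apply Real.exp_le_exp.mpr; rw [hL_def]; linarith
      have hkey : N ^ 2 * t ≤ t ^ ((1:ℝ)/3) := by
        have hsplit : t = t ^ ((2:ℝ)/3) * t ^ ((1:ℝ)/3) := by
          rw [← Real.rpow_add htpos]
          norm_num
        have h23 : t ^ ((2:ℝ)/3) ≤ Real.exp (-(2 * L)) := by
          calc t ^ ((2:ℝ)/3) ≤ (Real.exp (-(3 * L))) ^ ((2:ℝ)/3) :=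
                Real.rpow_le_rpow ht0 hcase (by norm_num)
            _ = Real.exp (-(2 * L)) := by
                rw [← Real.exp_mul]
                norm_num
                ring_nf
        calc N ^ 2 * t = N ^ 2 * t ^ ((2:ℝ)/3) * t ^ ((1:ℝ)/3) := by
              rw [mul_assoc, ← hsplit]
          _ ≤ Real.exp (2 * L) * Real.exp (-(2 * L)) * t ^ ((1:ℝ)/3) := by
              apply mul_le_mul_of_nonneg_right _ (Real.rpow_nonneg ht0 _)
              apply mul_le_mul hNle h23 (Real.rpow_nonneg ht0 _) (Real.exp_pos _).le
          _ = t ^ ((1:ℝ)/3) := by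
              rw [← Real.exp_add]
              simp
      have hpoly : t ^ ((1:ℝ)/3) ≤ A * a ^ (-q) := by
        have := stmt9_poly_bound hq htpos ht1
        rw [← hA_def, ← ha_def] at this
        exact this
      have hmain : |Real.log (‖T x‖ / ‖x‖) - Real.log (‖T y‖ / ‖y‖)| ≤
          Real.sqrt 2 * A * a ^ (-q) := by
        calc |Real.log (‖T x‖ / ‖x‖) - Real.log (‖T y‖ / ‖y‖)|
            ≤ Real.sqrt 2 * N ^ 2 * t := hlip
          _ = Real.sqrt 2 * (N ^ 2 * t) := by ring
          _ ≤ Real.sqrt 2 * (t ^ ((1:ℝ)/3)) :=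
              mul_le_mul_of_nonneg_left hkey (Real.sqrt_nonneg 2)
          _ ≤ Real.sqrt 2 * (A * a ^ (-q)) :=
              mul_le_mul_of_nonneg_left hpoly (Real.sqrt_nonneg 2)
          _ = Real.sqrt 2 * A * a ^ (-q) := by ring
      calc |Real.log (‖T x‖ / ‖x‖) - Real.log (‖T y‖ / ‖y‖)|
          ≤ Real.sqrt 2 * A * a ^ (-q) := hmain
        _ ≤ (Real.sqrt 2 * A + 2 * (q + 4) ^ q) * L ^ κ * a ^ (-q) := by
            have hs : (0:ℝ) ≤ Real.sqrt 2 * A + 2 * (q + 4) ^ q := by positivity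
            have h1 : Real.sqrt 2 * A ≤ (Real.sqrt 2 * A + 2 * (q + 4) ^ q) * L ^ κ := by
              calc Real.sqrt 2 * A ≤ (Real.sqrt 2 * A + 2 * (q + 4) ^ q) * 1 := by nlinarith
                _ ≤ (Real.sqrt 2 * A + 2 * (q + 4) ^ q) * L ^ κ :=
                    mul_le_mul_of_nonneg_left hLκ hs
            exact mul_le_mul_of_nonneg_right h1 hanegq.le
    · -- large t : use the trivial bound
      push_neg at hcase
      have hloga : a ≤ (q + 4) * L := by
        have h1 : -(3 * L) < Real.log t := (Real.lt_log_iff_exp_lt htpos).mpr hcase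
        rw [ha_def, hL_def]
        nlinarith
      have hHlb : ((q + 4) * L) ^ (-q) ≤ a ^ (-q) := by
        rw [Real.rpow_neg ha0.le, Real.rpow_neg (by positivity)]
        apply inv_anti₀ haq
        exact Real.rpow_le_rpow ha0.le hloga hq.le
      have hsplitH : ((q + 4) * L) ^ (-q) = (q + 4) ^ (-q) * L ^ (-q) :=
        Real.mul_rpow (by linarith) hL0.le
      have htriv : |Real.log (‖T x‖ / ‖x‖) - Real.log (‖T y‖ / ‖y‖)| ≤ 2 * Real.log N := by
        have b1 := stmt9_bdd T S N hTN hSN hST hN1 hx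
        have b2 := stmt9_bdd T S N hTN hSN hST hN1 hy
        calc |Real.log (‖T x‖ / ‖x‖) - Real.log (‖T y‖ / ‖y‖)|
            ≤ |Real.log (‖T x‖ / ‖x‖)| + |Real.log (‖T y‖ / ‖y‖)| := abs_sub _ _
          _ ≤ 2 * Real.log N := by linarith
      have hLval : L ^ κ * L ^ (-q) = L := by
        rw [← Real.rpow_add hL0]
        have : κ + -q = 1 := by rw [hq_def]; ring
        rw [this, Real.rpow_one]
      have hq4inv : (q + 4) ^ q * (q + 4) ^ (-q) = 1 := by
        rw [← Real.rpow_add (by linarith)]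
        simp
      have hfinal : 2 * L ≤ 2 * (q + 4) ^ q * L ^ κ * a ^ (-q) := by
        calc 2 * L = 2 * ((q + 4) ^ q * (q + 4) ^ (-q)) * (L ^ κ * L ^ (-q)) := by
              rw [hq4inv, hLval]; ring
          _ = 2 * (q + 4) ^ q * L ^ κ * ((q + 4) ^ (-q) * L ^ (-q)) := by ring
          _ = 2 * (q + 4) ^ q * L ^ κ * ((q + 4) * L) ^ (-q) := by rw [hsplitH]
          _ ≤ 2 * (q + 4) ^ q * L ^ κ * a ^ (-q) := by
              apply mul_le_mul_of_nonneg_left hHlb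
              positivity
      calc |Real.log (‖T x‖ / ‖x‖) - Real.log (‖T y‖ / ‖y‖)|
          ≤ 2 * Real.log N := htriv
        _ ≤ 2 * L := by rw [hL_def]; linarith
        _ ≤ 2 * (q + 4) ^ q * L ^ κ * a ^ (-q) := hfinal
        _ ≤ (Real.sqrt 2 * A + 2 * (q + 4) ^ q) * L ^ κ * a ^ (-q) := by
            apply mul_le_mul_of_nonneg_right _ hanegq.le
            apply mul_le_mul_of_nonneg_right _ (by positivity)
            nlinarith [Real.sqrt_nonneg 2, hA0]
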